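/- For every T ≥ 1 and every x ∈ [0, 2π/3], Σ_{j∈ℤ} exp(−2πT²(πj² + jx)) ≤ 1 + exp(−2π²/3) + 2·Σ_{j=1}^∞ exp(−2πj) < 1.01. -/

import Mathlib

open Real Set

noncomputable section


/-- The (unnormalized) `2π`-periodization of the Gaussian `x ↦ exp(-x²T²/2)`. -/
def periodicGaussSum (T x : ℝ) : ℝ :=
  ∑' j : ℤ, Real.exp (-((x + 2 * π * j) ^ 2 * T ^ 2) / 2)

/-- The normalizing constant `W = (Σ_{j∈ℤ} exp(-2π²j²T²))⁻¹`, so that `φ_p(0) = 1`. -/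
def Wconst (T : ℝ) : ℝ := (∑' j : ℤ, Real.exp (-(2 * π ^ 2 * j ^ 2 * T ^ 2)))⁻¹

/-- The periodic Gaussian `φ_p(x) = W·Σ_{j∈ℤ} exp(-(x+2πj)²T²/2)`. -/
def phip (T x : ℝ) : ℝ := Wconst T * periodicGaussSum T x

lemma geo_summable : Summable (fun j : ℕ => Real.exp (-(2 * π * (j + 1)))) := by
  have h : ∀ j : ℕ, Real.exp (-(2 * π * (j + 1))) = Real.exp (-(2*π)) * Real.exp (-(2*π)) ^ j := by
    intro j
    rw [← Real.exp_nat_mul, ← Real.exp_add]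
    ring_nf
  simp only [h]
  exact (summable_geometric_of_lt_one (Real.exp_nonneg _)
    (Real.exp_lt_one_iff.mpr (neg_lt_zero.mpr (by positivity)))).mul_left _

lemma exp_neg_six_lt : Real.exp (-6) < 0.0025 := by
  rw [Real.exp_neg]
  rw [show (6:ℝ) = (6:ℕ) * 1 by norm_num, Real.exp_nat_mul]
  have h6 : (2.7182818283:ℝ)^6 ≤ Real.exp 1 ^ 6 :=
    pow_le_pow_left₀ (by norm_num) (le_of_lt Real.exp_one_gt_d9) 6
  rw [inv_lt_comm₀ (by positivity) (by norm_num)]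
  nlinarith

lemma geo_tsum_lt : (∑' j : ℕ, Real.exp (-(2 * π * (j + 1)))) < 0.0026 := by
  have h : ∀ j : ℕ, Real.exp (-(2 * π * (j + 1))) = Real.exp (-(2*π)) * Real.exp (-(2*π)) ^ j := by
    intro j
    rw [← Real.exp_nat_mul, ← Real.exp_add]
    ring_nf
  have hr : Real.exp (-(2*π)) < 0.0025 := by
    have h1 : Real.exp (-(2*π)) ≤ Real.exp (-6) := by
      apply Real.exp_le_exp.mpr
      nlinarith [pi_gt_three]
    linarith [exp_neg_six_lt]
  have hrpos : (0:ℝ) < Real.exp (-(2*π)) := Real.exp_pos _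
  calc (∑' j : ℕ, Real.exp (-(2 * π * (j + 1))))
      = Real.exp (-(2*π)) * (1 - Real.exp (-(2*π)))⁻¹ := by
        simp only [h]
        rw [tsum_mul_left, tsum_geometric_of_lt_one (le_of_lt hrpos) (by linarith)]
    _ < 0.0026 := by
        rw [mul_inv_lt_iff₀ (by linarith)]
        nlinarith

theorem periodicGaussian_sum_bound (T : ℝ) (hT : 1 ≤ T)
    (x : ℝ) (hx : x ∈ Icc (0 : ℝ) (2 * π / 3)) :
    (∑' j : ℤ, Real.exp (-(2 * π * T ^ 2 * (π * j ^ 2 + j * x)))) ≤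
        1 + Real.exp (-(2 * π ^ 2 / 3)) + 2 * ∑' j : ℕ, Real.exp (-(2 * π * (j + 1))) ∧
      1 + Real.exp (-(2 * π ^ 2 / 3)) + 2 * ∑' j : ℕ, Real.exp (-(2 * π * (j + 1))) < 1.01 := by
  obtain ⟨hx0, hx1⟩ := hx
  set f : ℤ → ℝ := fun j => Real.exp (-(2 * π * T ^ 2 * (π * (j:ℝ) ^ 2 + (j:ℝ) * x))) with hf
  have hT2 : (1:ℝ) ≤ T ^ 2 := by nlinarith
  -- key exponent bound
  have hkey : ∀ r : ℝ, 1 ≤ |r| → 2 * π * |r| ≤ 2 * π * T ^ 2 * (π * r ^ 2 + r * x) := by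
    intro r hr
    have h1 : - |r| * x ≤ r * x := mul_le_mul_of_nonneg_right (neg_abs_le r) hx0
    have h2 : |r| * x ≤ |r| * (2 * π / 3) := mul_le_mul_of_nonneg_left hx1 (abs_nonneg r)
    have h3 : r ^ 2 = |r| ^ 2 := (sq_abs r).symm
    have ha : |r| ≤ |r| ^ 2 := by nlinarith [abs_nonneg r]
    have hc : π * |r| ≤ π * |r| ^ 2 := mul_le_mul_of_nonneg_left ha pi_pos.le
    have hb : 0 ≤ (π - 2 * π / 3 - 1) * |r| :=
      mul_nonneg (by nlinarith [pi_gt_three]) (abs_nonneg r)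
    have h4 : |r| ≤ π * r ^ 2 + r * x := by nlinarith
    have h5 : 0 ≤ π * r ^ 2 + r * x := le_trans (le_trans zero_le_one hr) h4
    nlinarith [pi_pos, mul_le_mul_of_nonneg_right hT2 h5]
  have hbound : ∀ j : ℤ, 1 ≤ |(j:ℝ)| → f j ≤ Real.exp (-(2 * π * |(j:ℝ)|)) := by
    intro j hj
    exact Real.exp_le_exp.mpr (neg_le_neg (hkey _ hj))
  have hposshift : ∀ n : ℕ, f (n + 1) ≤ Real.exp (-(2 * π * (n + 1))) := by
    intro n
    have h := hbound ((n:ℤ) + 1) (by push_cast; rw [abs_of_nonneg (by positivity)]; linarith)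
    refine le_trans h (le_of_eq ?_)
    congr 1
    rw [show |(((n:ℤ) + 1 : ℤ):ℝ)| = ((n:ℝ) + 1) by push_cast; rw [abs_of_nonneg (by positivity)]]
  have hneg1 : ∀ n : ℕ, f (-(n + 1)) ≤ Real.exp (-(2 * π * (n + 1))) := by
    intro n
    have h := hbound (-((n:ℤ) + 1))
      (by push_cast; rw [abs_neg, abs_of_nonneg (by positivity)]; linarith)
    refine le_trans h (le_of_eq ?_)
    congr 1
    rw [show |((-((n:ℤ) + 1) : ℤ):ℝ)| = ((n:ℝ) + 1) by
      push_cast; rw [abs_neg, abs_of_nonneg (by positivity)]]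
  have hnegshift : ∀ n : ℕ, f (-(n + 1) + -1) ≤ Real.exp (-(2 * π * (n + 1))) := by
    intro n
    have h := hbound (-((n:ℤ) + 1) + -1)
      (by push_cast
          rw [show -((n:ℝ)+1) + -1 = -((n:ℝ)+2) by ring, abs_neg, abs_of_nonneg (by positivity)]
          linarith)
    refine le_trans h (Real.exp_le_exp.mpr ?_)
    rw [show |((-((n:ℤ) + 1) + -1 : ℤ):ℝ)| = ((n:ℝ) + 2) by
      push_cast
      rw [show -((n:ℝ)+1) + -1 = -((n:ℝ)+2) by ring, abs_neg, abs_of_nonneg (by positivity)]]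
    nlinarith [pi_pos]
  -- summability
  have hSpos : Summable (fun n : ℕ => f (n + 1)) :=
    Summable.of_nonneg_of_le (fun n => (Real.exp_pos _).le) hposshift geo_summable
  have hSneg : Summable (fun n : ℕ => f (-(n + 1))) :=
    Summable.of_nonneg_of_le (fun n => (Real.exp_pos _).le) hneg1 geo_summable
  have hSneg2 : Summable (fun n : ℕ => f (-(n + 1) + -1)) :=
    Summable.of_nonneg_of_le (fun n => (Real.exp_pos _).le) hnegshift geo_summable
  have hSnat : Summable (fun n : ℕ => f n) := by
    rw [← summable_nat_add_iff 1]
    exact_mod_cast hSpos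
  have hf0 : f 0 = 1 := by simp [hf]
  have hm1 : f (-1) ≤ Real.exp (-(2 * π ^ 2 / 3)) := by
    apply Real.exp_le_exp.mpr
    apply neg_le_neg
    have he : π * ((-1:ℤ):ℝ) ^ 2 + ((-1:ℤ):ℝ) * x = π - x := by push_cast; ring
    rw [he]
    nlinarith [pi_pos, mul_le_mul_of_nonneg_right hT2 (by linarith [pi_pos] : (0:ℝ) ≤ π - x)]
  set S := ∑' j : ℕ, Real.exp (-(2 * π * (j + 1))) with hS
  constructor
  · have hsplit : (∑' j : ℤ, f j) = (∑' n : ℕ, f n) + ∑' n : ℕ, f (-(n + 1)) :=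
      tsum_of_nat_of_neg_add_one hSnat hSneg
    have e1 : (∑' n : ℕ, f n) = f 0 + ∑' n : ℕ, f (n + 1) := by
      have h := Summable.tsum_eq_zero_add hSnat
      push_cast at h
      convert h using 3 with n
    have e2 : (∑' n : ℕ, f (-(n + 1))) = f (-1) + ∑' n : ℕ, f (-(n + 1) + -1) := by
      have h := Summable.tsum_eq_zero_add hSneg
      push_cast at h
      convert h using 3 with n
      · rfl
      · funext n; congr 1
    have b1 : (∑' n : ℕ, f (n + 1)) ≤ S := Summable.tsum_le_tsum hposshift hSpos geo_summable
    have b2 : (∑' n : ℕ, f (-(n + 1) + -1)) ≤ S := Summable.tsum_le_tsum hnegshift hSneg2 geo_summable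
    calc (∑' j : ℤ, f j)
        = f 0 + (∑' n : ℕ, f (n + 1)) + (f (-1) + ∑' n : ℕ, f (-(n + 1) + -1)) := by
          rw [hsplit, e1, e2]
      _ ≤ 1 + S + (Real.exp (-(2 * π ^ 2 / 3)) + S) := by
          rw [hf0]; gcongr
      _ = 1 + Real.exp (-(2 * π ^ 2 / 3)) + 2 * S := by ring
  · have h1 : Real.exp (-(2 * π ^ 2 / 3)) ≤ Real.exp (-6) := by
      apply Real.exp_le_exp.mpr
      nlinarith [pi_gt_three]
    have hgeo := geo_tsum_lt
    rw [← hS] at hgeo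
    have h2 : Real.exp (-(2 * π ^ 2 / 3)) < 0.0025 := lt_of_le_of_lt h1 exp_neg_six_lt
    have : (1:ℝ) + 0.0025 + 2 * 0.0026 ≤ 1.01 := by norm_num
    linarith

end
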